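/- Let u be a harmonic function in the upper half plane ℍ with sup_{z ∈ ℍ} Im(z) |∇u(z)| ≤ A, let M > 0, let I ⊂ ℝ be a closed interval, and let F(I) be the family of maximal dyadic subintervals I_j ⊂ I such that |u(z_{I_j}) − u(z_I)| ≥ M. Then every I_j ∈ F(I) satisfies |I_j| ≤ 2^{−M/(A√2)} |I|. -/

import Mathlib

open Set Metric MeasureTheory Filter Topology
open scoped ENNReal NNReal

noncomputable section

/-- The open upper half plane in `ℂ`. -/
def UHP : Set ℂ := {z : ℂ | 0 < z.im}

/-- The `α`-dimensional Hausdorff content of a set. -/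
def hContent {X : Type*} [PseudoEMetricSpace X] (α : ℝ) (A : Set X) : ℝ≥0∞ :=
  ⨅ (E : ℕ → Set X) (_ : A ⊆ ⋃ n, E n), ∑' n, EMetric.diam (E n) ^ α

/-- `Ω` is a `C`-John domain with center `z₀`: every point of `Ω` can be joined to `z₀`
by a rectifiable curve in `Ω` along which the distance to the boundary dominates
(up to the factor `C`) the length of the subcurve already traversed. -/
def IsJohnDomain (C : ℝ) (Ω : Set ℂ) (z₀ : ℂ) : Prop :=
  z₀ ∈ Ω ∧ ∀ z ∈ Ω, ∃ γ : ℝ → ℂ,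
    ContinuousOn γ (Set.Icc 0 1) ∧ γ 0 = z ∧ γ 1 = z₀ ∧
    (∀ t ∈ Set.Icc (0:ℝ) 1, γ t ∈ Ω) ∧
    eVariationOn γ (Set.Icc 0 1) ≠ ⊤ ∧
    ∀ t ∈ Set.Icc (0:ℝ) 1,
      (eVariationOn γ (Set.Icc 0 t)).toReal ≤ C * infDist (γ t) (frontier Ω)

/-- `u` is harmonic on the upper half plane: it is `C²` there and satisfies
`u_xx + u_yy = 0`. -/
def HarmonicOnH (u : ℂ → ℝ) : Prop :=
  ContDiffOn ℝ 2 u UHP ∧ ∀ z ∈ UHP,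
    fderiv ℝ (fun w => fderiv ℝ u w 1) z 1 +
      fderiv ℝ (fun w => fderiv ℝ u w Complex.I) z Complex.I = 0

/-- For an interval `I = [c, d]`, the point `z_I = x_I + i |I|` where `x_I` is the center. -/
def zI (c d : ℝ) : ℂ := ((c + d) / 2 : ℝ) + (d - c) * Complex.I

/-- The square `Q(I) = {x + iy : x ∈ I, 0 < y < |I|}` over the interval `I = [c, d]`. -/
def Qsq (c d : ℝ) : Set ℂ := {z : ℂ | z.re ∈ Set.Icc c d ∧ z.im ∈ Set.Ioo 0 (d - c)}

/-- `[c, d]` is a dyadic subinterval of `[a, b]`, i.e. obtained by repeated bisection. -/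
def IsDyadicSub (a b c d : ℝ) : Prop :=
  ∃ n k : ℕ, k < 2 ^ n ∧ c = a + k * (b - a) / 2 ^ n ∧ d = a + (k + 1) * (b - a) / 2 ^ n

/-- The family `F(I)` of maximal dyadic subintervals `J` of `I = [a, b]` with
`|u(z_J) - u(z_I)| ≥ M`, encoded as pairs of endpoints. -/
def MaxF (u : ℂ → ℝ) (a b M : ℝ) : Set (ℝ × ℝ) :=
  {p : ℝ × ℝ | IsDyadicSub a b p.1 p.2 ∧ M ≤ |u (zI p.1 p.2) - u (zI a b)| ∧
    ∀ c d : ℝ, IsDyadicSub a b c d → M ≤ |u (zI c d) - u (zI a b)| →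
      Set.Icc p.1 p.2 ⊆ Set.Icc c d → c = p.1 ∧ d = p.2}

/-- The set `G(I)` of points `x` of `I = [a, b]` over whose whole vertical segment in `Q(I)`
the oscillation `|u - u(z_I)|` is at most `M + A√2`. -/
def GSet (u : ℂ → ℝ) (a b M A : ℝ) : Set ℝ :=
  {x ∈ Set.Icc a b | ∀ y : ℝ, 0 < y → y < b - a →
    |u ((x : ℂ) + y * Complex.I) - u (zI a b)| ≤ M + A * Real.sqrt 2}

/-- The sawtooth region `S(E)` over `E ⊆ (x₀ - y₀/2, x₀ + y₀/2)`. -/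
def Sawtooth (E : Set ℝ) (x₀ y₀ : ℝ) : Set ℂ :=
  {z : ℂ | z.re ∈ Set.Ioo (x₀ - y₀ / 2) (x₀ + y₀ / 2) ∧ 0 < z.im ∧
    infDist z.re E ≤ z.im ∧ z.im < y₀}

lemma isOpen_UHP : IsOpen UHP := isOpen_Ioi.preimage Complex.continuous_im

lemma seg_est (u : ℂ → ℝ) (A : ℝ) (hA : 0 ≤ A)
    (hd : ∀ z ∈ UHP, DifferentiableAt ℝ u z)
    (hb : ∀ z ∈ UHP, z.im * ‖fderiv ℝ u z‖ ≤ A)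
    (m : ℝ) (hm : 0 < m) (z w : ℂ) (hz : m ≤ z.im) (hw : m ≤ w.im) :
    |u z - u w| ≤ A / m * ‖z - w‖ := by
  set s : Set ℂ := {z : ℂ | m ≤ z.im} with hs
  have hconv : Convex ℝ s := convex_halfSpace_ge Complex.imLm.isLinear m
  have hsub : s ⊆ UHP := fun x (hx : m ≤ x.im) => lt_of_lt_of_le hm hx
  have hint : (interior s).Nonempty := by
    refine ⟨(m + 1) * Complex.I, ?_⟩
    have ho : IsOpen {z : ℂ | m < z.im} := isOpen_Ioi.preimage Complex.continuous_im
    have hsub2 : {z : ℂ | m < z.im} ⊆ s := fun x (hx : m < x.im) => le_of_lt hx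
    apply interior_maximal hsub2 ho
    simp [Set.mem_setOf_eq]
  have hud : UniqueDiffOn ℝ s := uniqueDiffOn_convex hconv hint
  have hdiff : DifferentiableOn ℝ u s := fun x hx =>
    (hd x (hsub hx)).differentiableWithinAt
  have hbound : ∀ x ∈ s, ‖fderivWithin ℝ u s x‖ ≤ A / m := by
    intro x hx
    rw [(hd x (hsub hx)).fderivWithin (hud x hx)]
    have h1 : x.im * ‖fderiv ℝ u x‖ ≤ A := hb x (hsub hx)
    have h2 : ‖fderiv ℝ u x‖ ≤ A / x.im := by
      rw [le_div_iff₀ (lt_of_lt_of_le hm hx)]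
      linarith [h1]
    refine h2.trans ?_
    exact div_le_div_of_nonneg_left hA hm hx
  have := hconv.norm_image_sub_le_of_norm_fderivWithin_le hdiff hbound hw hz
  simpa [Real.norm_eq_abs] using this

lemma step_est (u : ℂ → ℝ) (A : ℝ) (hA : 0 ≤ A)
    (hd : ∀ z ∈ UHP, DifferentiableAt ℝ u z)
    (hb : ∀ z ∈ UHP, z.im * ‖fderiv ℝ u z‖ ≤ A)
    (x x' y : ℝ) (hy : 0 < y) (hxx : |x - x'| ≤ y / 2) :
    |u ((x : ℂ) + (y : ℝ) * Complex.I) - u ((x' : ℂ) + ((2 * y : ℝ) : ℂ) * Complex.I)| ≤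
      A * Real.sqrt 2 := by
  have h1 : |u ((x : ℂ) + (y : ℝ) * Complex.I) -
      u ((x' : ℂ) + ((2 * y : ℝ) : ℂ) * Complex.I)| ≤ A / y *
      ‖(x : ℂ) + (y : ℝ) * Complex.I - ((x' : ℂ) + ((2 * y : ℝ) : ℂ) * Complex.I)‖ :=
    seg_est u A hA hd hb y hy _ _ (by simp) (by simp; linarith)
  set z : ℂ := (x : ℂ) + (y : ℝ) * Complex.I with hzdef
  set w : ℂ := (x' : ℂ) + ((2 * y : ℝ) : ℂ) * Complex.I with hwdef
  have hre : (z - w).re = x - x' := by rw [hzdef, hwdef]; simp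
  have him : (z - w).im = -y := by rw [hzdef, hwdef]; simp; ring
  have hnorm : ‖z - w‖ ≤ Real.sqrt 2 * y := by
    have : ‖z - w‖ = Real.sqrt ((x - x') ^ 2 + y ^ 2) := by
      rw [Complex.norm_def, Complex.normSq_apply, hre, him]
      ring_nf
    rw [this]
    have h2 : (x - x') ^ 2 + y ^ 2 ≤ 2 * y ^ 2 := by
      have := sq_abs (x - x')
      nlinarith [abs_nonneg (x - x'), sq_nonneg (x - x')]
    calc Real.sqrt ((x - x') ^ 2 + y ^ 2) ≤ Real.sqrt (2 * y ^ 2) :=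
          Real.sqrt_le_sqrt h2
      _ = Real.sqrt 2 * y := by
          rw [Real.sqrt_mul (by norm_num), Real.sqrt_sq hy.le]
  calc |u z - u w| ≤ A / y * ‖z - w‖ := h1
    _ ≤ A / y * (Real.sqrt 2 * y) := by
        apply mul_le_mul_of_nonneg_left hnorm (by positivity)
    _ = A * Real.sqrt 2 := by field_simp

lemma level_est (u : ℂ → ℝ) (A : ℝ) (hA : 0 ≤ A)
    (hd : ∀ z ∈ UHP, DifferentiableAt ℝ u z)
    (hb : ∀ z ∈ UHP, z.im * ‖fderiv ℝ u z‖ ≤ A)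
    (a b : ℝ) (hab : a < b) :
    ∀ n k : ℕ, k < 2 ^ n →
      |u (zI (a + k * (b - a) / 2 ^ n) (a + (k + 1) * (b - a) / 2 ^ n)) - u (zI a b)| ≤
        n * (A * Real.sqrt 2) := by
  intro n
  induction n with
  | zero =>
    intro k hk
    have hk0 : k = 0 := Nat.lt_one_iff.mp hk
    subst hk0
    norm_num
  | succ n ih =>
    intro k hk
    set k' := k / 2 with hk'def
    have hk' : k' < 2 ^ n := by
      rw [hk'def, Nat.div_lt_iff_lt_mul (by norm_num)]
      calc k < 2 ^ (n + 1) := hk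
        _ = 2 ^ n * 2 := by ring
    have hpar := ih k' hk'
    set c : ℝ := a + k * (b - a) / 2 ^ (n + 1) with hc
    set d : ℝ := a + (k + 1) * (b - a) / 2 ^ (n + 1) with hdd
    set c' : ℝ := a + k' * (b - a) / 2 ^ n with hc'
    set d' : ℝ := a + (k' + 1) * (b - a) / 2 ^ n with hd'
    set y : ℝ := (b - a) / 2 ^ (n + 1) with hyd
    have hy : 0 < y := by rw [hyd]; exact div_pos (by linarith) (by positivity)
    have h1 : d - c = y := by rw [hdd, hc, hyd]; push_cast; ring
    have h2 : d' - c' = 2 * y := by rw [hd', hc', hyd]; push_cast; ring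
    have hmod := Nat.div_add_mod k 2
    have h3 : |(c + d) / 2 - (c' + d') / 2| = y / 2 := by
      rcases Nat.mod_two_eq_zero_or_one k with hr | hr
      · have hkk : (k : ℝ) = 2 * k' := by
          have h : k = 2 * k' := by omega
          rw [h]; push_cast; ring
        have : (c + d) / 2 - (c' + d') / 2 = -(y / 2) := by
          rw [hc, hdd, hc', hd', hyd, hkk]; push_cast; ring
        rw [this, abs_neg, abs_of_nonneg (by linarith)]
      · have hkk : (k : ℝ) = 2 * k' + 1 := by
          have h : k = 2 * k' + 1 := by omega
          rw [h]; push_cast; ring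
        have : (c + d) / 2 - (c' + d') / 2 = y / 2 := by
          rw [hc, hdd, hc', hd', hyd, hkk]; push_cast; ring
        rw [this, abs_of_nonneg (by linarith)]
    have hstep := step_est u A hA hd hb ((c + d) / 2) ((c' + d') / 2) y hy (le_of_eq h3)
    have h1c : (d : ℂ) - c = (y : ℂ) := by rw [← Complex.ofReal_sub, h1]
    have h2c : (d' : ℂ) - c' = ((2 * y : ℝ) : ℂ) := by rw [← Complex.ofReal_sub, h2]
    have e1 : zI c d = ((c + d) / 2 : ℝ) + (y : ℝ) * Complex.I := by
      rw [zI, h1c]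
    have e2 : zI c' d' = ((c' + d') / 2 : ℝ) + ((2 * y : ℝ) : ℂ) * Complex.I := by
      rw [zI, h2c]
    rw [e1] at *
    calc |u (((c + d) / 2 : ℝ) + (y : ℝ) * Complex.I) - u (zI a b)|
        ≤ |u (((c + d) / 2 : ℝ) + (y : ℝ) * Complex.I) - u (zI c' d')| +
          |u (zI c' d') - u (zI a b)| := abs_sub_le _ _ _
      _ ≤ A * Real.sqrt 2 + n * (A * Real.sqrt 2) := by
          rw [← e2] at hstep; exact add_le_add hstep hpar
      _ = (n + 1 : ℕ) * (A * Real.sqrt 2) := by push_cast; ring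

/-- every interval of the maximal family `F(I)` has length at most
`2^{-M/(A√2)} |I|`. -/
theorem maximal_family_size (u : ℂ → ℝ) (A M : ℝ) (hM : 0 < M)
    (hh : HarmonicOnH u) (hb : ∀ z ∈ UHP, z.im * ‖fderiv ℝ u z‖ ≤ A)
    (a b : ℝ) (hab : a < b) :
    ∀ p ∈ MaxF u a b M, p.2 - p.1 ≤ (2 : ℝ) ^ (-(M / (A * Real.sqrt 2))) * (b - a) := by
  intro p hp
  obtain ⟨⟨n, k, hk, hc, hd⟩, hMle, -⟩ := hp
  have hIuhp : Complex.I ∈ UHP := by simp [UHP]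
  have hA : 0 ≤ A := by
    have h0 := hb Complex.I hIuhp
    simp only [Complex.I_im, one_mul] at h0
    exact le_trans (norm_nonneg _) h0
  have hdiff : ∀ z ∈ UHP, DifferentiableAt ℝ u z := by
    intro z hz
    exact (hh.1.differentiableOn (by norm_num)).differentiableAt
      (isOpen_UHP.mem_nhds hz)
  have key := level_est u A hA hdiff hb a b hab n k hk
  rw [hc, hd] at hMle
  have hMn : M ≤ n * (A * Real.sqrt 2) := le_trans hMle key
  have hApos : 0 < A := by
    rcases hA.lt_or_eq with h | h
    · exact h
    · exfalso
      rw [← h, zero_mul, mul_zero] at hMn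
      linarith
  have hs2 : 0 < A * Real.sqrt 2 := mul_pos hApos (Real.sqrt_pos.mpr (by norm_num))
  have hn : M / (A * Real.sqrt 2) ≤ n := (div_le_iff₀ hs2).mpr hMn
  have hrpow : (2 : ℝ) ^ (-(n : ℝ)) ≤ (2 : ℝ) ^ (-(M / (A * Real.sqrt 2))) := by
    apply Real.rpow_le_rpow_left_iff (x := 2) (by norm_num) |>.mpr
    linarith
  have hval : (2 : ℝ) ^ (-(n : ℝ)) = ((2 : ℝ) ^ n)⁻¹ := by
    rw [Real.rpow_neg (by norm_num), Real.rpow_natCast]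
  have hlen : p.2 - p.1 = (b - a) / 2 ^ n := by rw [hc, hd]; ring
  rw [hlen]
  calc (b - a) / 2 ^ n = ((2 : ℝ) ^ n)⁻¹ * (b - a) := by ring
    _ ≤ (2 : ℝ) ^ (-(M / (A * Real.sqrt 2))) * (b - a) := by
        apply mul_le_mul_of_nonneg_right _ (by linarith)
        rw [← hval]; exact hrpow
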